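/- Let τ > 0 and a₁, a₀, α₁, α₀ ∈ ℝ. Then no root of Δ has multiplicity exceeding 4: there is no s₀ ∈ ℂ such that Δ(s₀), Δ'(s₀), Δ''(s₀), Δ'''(s₀), and Δ⁽⁴⁾(s₀) all vanish. -/

import Mathlib

open Complex

/-- Pólya–Szegő bound for Δ: no root of Δ has multiplicity exceeding 4:
there is no s₀ at which Δ and its first four derivatives all vanish. -/
theorem no_root_of_multiplicity_five
    (τ a₁ a₀ α₁ α₀ : ℝ) (hτ : 0 < τ)
    (Δ : ℂ → ℂ)
    (hΔ : ∀ s : ℂ, Δ s = s ^ 2 + a₁ * s + a₀ + Complex.exp (-s * τ) * (α₁ * s + α₀)) :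
    ¬ ∃ s₀ : ℂ, Δ s₀ = 0 ∧ deriv Δ s₀ = 0 ∧ iteratedDeriv 2 Δ s₀ = 0 ∧
      iteratedDeriv 3 Δ s₀ = 0 ∧ iteratedDeriv 4 Δ s₀ = 0 := by
  rintro ⟨s₀, h0, h1, h2, h3, h4⟩
  set c : ℂ := -(τ : ℂ) with hc
  have hcne : c ≠ 0 := by
    simp only [hc, neg_ne_zero, Ne, Complex.ofReal_eq_zero]
    exact ne_of_gt hτ
  set C : ℂ := (α₁ : ℂ) with hC0
  set D : ℂ := (α₀ : ℂ) with hD0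
  have key : ∀ (C' D' s : ℂ),
      HasDerivAt (fun s => Complex.exp (c * s) * (C' * s + D'))
        (Complex.exp (c * s) * (c * C' * s + (c * D' + C'))) s := by
    intro C' D' s
    have h1 : HasDerivAt (fun s : ℂ => c * s) c s := by
      simpa using (hasDerivAt_id s).const_mul c
    have h2 := h1.cexp
    have h3 : HasDerivAt (fun s : ℂ => C' * s + D') C' s := by
      simpa using ((hasDerivAt_id s).const_mul C').add_const D'
    have h4 : HasDerivAt (fun s => Complex.exp (c * s) * (C' * s + D')) _ s := h2.mul h3
    convert h4 using 1
    ring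
  have hfun : Δ = fun s => (s ^ 2 + a₁ * s + a₀) + Complex.exp (c * s) * (C * s + D) := by
    funext s
    rw [hΔ]
    have he : -s * (τ : ℂ) = c * s := by rw [hc]; ring
    rw [he]
  have hd1 : deriv Δ =
      fun s => (2 * s + a₁) + Complex.exp (c * s) * (c * C * s + (c * D + C)) := by
    funext s
    rw [hfun]
    refine HasDerivAt.deriv ?_
    have hp : HasDerivAt (fun s : ℂ => s ^ 2 + a₁ * s + a₀) (2 * s + a₁) s := by
      have : HasDerivAt (fun s : ℂ => s ^ 2 + a₁ * s + a₀) _ s := ((hasDerivAt_pow 2 s).add ((hasDerivAt_id s).const_mul (a₁ : ℂ))).add_const (a₀ : ℂ)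
      convert this using 1
      push_cast
      ring
    exact hp.add (key C D s)
  have hd2 : deriv (deriv Δ) =
      fun s => (2 : ℂ) + Complex.exp (c * s) *
        (c * (c * C) * s + (c * (c * D + C) + c * C)) := by
    funext s
    rw [hd1]
    refine HasDerivAt.deriv ?_
    have hp : HasDerivAt (fun s : ℂ => 2 * s + (a₁ : ℂ)) 2 s := by
      simpa using ((hasDerivAt_id s).const_mul (2 : ℂ)).add_const (a₁ : ℂ)
    exact hp.add (key _ _ s)
  have hd3 : deriv (deriv (deriv Δ)) =
      fun s => (0 : ℂ) + Complex.exp (c * s) *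
        (c * (c * (c * C)) * s + (c * (c * (c * D + C) + c * C) + c * (c * C))) := by
    funext s
    rw [hd2]
    refine HasDerivAt.deriv ?_
    exact (hasDerivAt_const s (2 : ℂ)).add (key _ _ s)
  have hd4 : deriv (deriv (deriv (deriv Δ))) =
      fun s => (0 : ℂ) + Complex.exp (c * s) *
        (c * (c * (c * (c * C))) * s +
          (c * (c * (c * (c * D + C) + c * C) + c * (c * C)) + c * (c * (c * C)))) := by
    funext s
    rw [hd3]
    refine HasDerivAt.deriv ?_
    exact (hasDerivAt_const s (0 : ℂ)).add (key _ _ s)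
  have e2 : iteratedDeriv 2 Δ = deriv (deriv Δ) := by
    rw [show (2 : ℕ) = 1 + 1 from rfl, iteratedDeriv_succ, iteratedDeriv_one]
  have e3 : iteratedDeriv 3 Δ = deriv (deriv (deriv Δ)) := by
    rw [show (3 : ℕ) = 2 + 1 from rfl, iteratedDeriv_succ, e2]
  have e4 : iteratedDeriv 4 Δ = deriv (deriv (deriv (deriv Δ))) := by
    rw [show (4 : ℕ) = 3 + 1 from rfl, iteratedDeriv_succ, e3]
  rw [e2, hd2] at h2
  rw [e3, hd3] at h3
  rw [e4, hd4] at h4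
  simp only at h2 h3 h4
  have hE : Complex.exp (c * s₀) ≠ 0 := Complex.exp_ne_zero _
  rw [zero_add] at h3 h4
  have t3 := (mul_eq_zero.mp h3).resolve_left hE
  have t4 := (mul_eq_zero.mp h4).resolve_left hE
  have w3 : c * (C * s₀ + D) + 3 * C = 0 := by
    have h : c ^ 2 * (c * (C * s₀ + D) + 3 * C) = 0 := by linear_combination t3
    rcases mul_eq_zero.mp h with h' | h'
    · exact absurd h' (pow_ne_zero 2 hcne)
    · exact h'
  have w4 : c * (C * s₀ + D) + 4 * C = 0 := by
    have h : c ^ 3 * (c * (C * s₀ + D) + 4 * C) = 0 := by linear_combination t4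
    rcases mul_eq_zero.mp h with h' | h'
    · exact absurd h' (pow_ne_zero 3 hcne)
    · exact h'
  have hCz : C = 0 := by linear_combination w4 - w3
  have hCD : C * s₀ + D = 0 := by
    have h : c * (C * s₀ + D) = 0 := by linear_combination w3 - 3 * hCz
    rcases mul_eq_zero.mp h with h' | h'
    · exact absurd h' hcne
    · exact h'
  have hinner : c * (c * C) * s₀ + (c * (c * D + C) + c * C) = 0 := by
    linear_combination c ^ 2 * hCD + 2 * c * hCz
  rw [hinner, mul_zero, add_zero] at h2
  exact two_ne_zero h2
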